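/- The constant coefficient system ℚ̲ (sending every orbit G/K to ℚ and every G-map to the identity) is an injective object in the category of rational Bredon coefficient systems over a finite group G. -/

import Mathlib

open CategoryTheory

/-- Objects of the canonical orbit category of `G`: the orbits `G/H`
for subgroups `H ≤ G`. -/
structure OrbitObj (G : Type) [Group G] where
  H : Subgroup G

variable (G : Type) [Group G]

/-- The canonical orbit category of `G`: objects are the `G`-sets `G/H`,
morphisms are the `G`-equivariant maps. -/
instance : Category (OrbitObj G) where
  Hom A B := {f : G ⧸ A.H → G ⧸ B.H // ∀ (g : G) (x : G ⧸ A.H), f (g • x) = g • f x}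
  id A := ⟨id, fun _ _ => rfl⟩
  comp f g := ⟨g.1 ∘ f.1, by intro a x; simp only [Function.comp_apply, f.2, g.2]⟩
  id_comp := by intros; rfl
  comp_id := by intros; rfl
  assoc := by intros; rfl

/-- A (rational) Bredon coefficient system: a contravariant functor from the
orbit category of `G` to `ℚ`-vector spaces. -/
abbrev CoefficientSystem := (OrbitObj G)ᵒᵖ ⥤ ModuleCat.{0} ℚ

/-- The constant coefficient system `ℚ̲`, sending every orbit to `ℚ`
and every `G`-map to the identity. -/
def constQ : CoefficientSystem G := (Functor.const (OrbitObj G)ᵒᵖ).obj (ModuleCat.of ℚ ℚ)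

namespace ConstQAux

variable {G}

/-- The free orbit `G/⊥`. -/
def pt (G : Type) [Group G] : OrbitObj G := ⟨⊥⟩

/-- The projection `G/⊥ → G/K`. -/
def toOrbit (K : OrbitObj G) : pt G ⟶ K :=
  ⟨Quotient.map' id (fun a b h => by
      have hab : a = b := by
        have h' : a⁻¹ * b ∈ (⊥ : Subgroup G) := QuotientGroup.leftRel_apply.mp h
        rw [Subgroup.mem_bot] at h'
        exact inv_mul_eq_one.mp h'
      subst hab; exact QuotientGroup.leftRel_apply.mpr (by simpa using K.H.one_mem)),
   fun g x => Quotient.inductionOn' x (fun y => rfl)⟩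

lemma toOrbit_mk (K : OrbitObj G) (x : G) :
    (toOrbit K).1 (QuotientGroup.mk x) = QuotientGroup.mk x := rfl

/-- Right multiplication as a map of the free orbit. -/
def rmulFun (a : G) : G ⧸ (pt G).H → G ⧸ (pt G).H :=
  Quotient.map' (· * a) (fun b c h => by
      have hbc : b = c := by
        have h' : b⁻¹ * c ∈ (⊥ : Subgroup G) := QuotientGroup.leftRel_apply.mp h
        rw [Subgroup.mem_bot] at h'
        exact inv_mul_eq_one.mp h'
      subst hbc; exact QuotientGroup.leftRel_apply.mpr (by simpa [mul_assoc] using (pt G).H.one_mem))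

lemma rmulFun_mk (a x : G) : rmulFun a (QuotientGroup.mk x) = QuotientGroup.mk (x * a) := rfl

/-- Right multiplication, an endomorphism of `G/⊥` in the orbit category. -/
def rmul (a : G) : pt G ⟶ pt G :=
  ⟨rmulFun a,
   fun g x => Quotient.inductionOn' x (fun y => by
      have h1 : g • (QuotientGroup.mk y : G ⧸ (pt G).H) = QuotientGroup.mk (g * y) := rfl
      have h2 : g • (QuotientGroup.mk (y * a) : G ⧸ (pt G).H) = QuotientGroup.mk (g * (y * a)) := rfl
      show rmulFun a (g • (QuotientGroup.mk y : G ⧸ (pt G).H)) = g • rmulFun a (QuotientGroup.mk y)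
      rw [rmulFun_mk, h1, rmulFun_mk, h2, mul_assoc])⟩

lemma rmul_mk (a x : G) : (rmul a).1 (QuotientGroup.mk x) = QuotientGroup.mk (x * a) := rfl

lemma rmul_comp (a b : G) : rmul a ≫ rmul b = rmul (a * b) := by
  apply Subtype.ext
  funext x
  refine Quotient.inductionOn' x (fun y => ?_)
  show (rmul b).1 ((rmul a).1 (QuotientGroup.mk y)) = (rmul (a*b)).1 (QuotientGroup.mk y)
  rw [rmul_mk, rmul_mk, rmul_mk, mul_assoc]

/-- Every map out of the free orbit factors through right multiplication. -/
lemma factor {K L : OrbitObj G} (u : K ⟶ L) :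
    ∃ a : G, toOrbit K ≫ u = rmul a ≫ toOrbit L := by
  obtain ⟨a, ha⟩ := Quotient.exists_rep (u.1 (QuotientGroup.mk (1 : G)))
  refine ⟨a, Subtype.ext (funext fun x => ?_)⟩
  refine Quotient.inductionOn' x (fun y => ?_)
  show u.1 ((toOrbit K).1 (QuotientGroup.mk y)) = (toOrbit L).1 ((rmul a).1 (QuotientGroup.mk y))
  rw [toOrbit_mk, rmul_mk, toOrbit_mk]
  have h1 : (QuotientGroup.mk y : G ⧸ K.H) = y • (QuotientGroup.mk (1 : G)) := by
    show _ = (QuotientGroup.mk (y * 1) : G ⧸ K.H); rw [mul_one]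
  rw [h1, u.2, ← ha]
  rfl

end ConstQAux

open ConstQAux

/-- For a finite group `G`, the constant coefficient system `ℚ̲` is an
injective object in the category of rational Bredon coefficient systems. -/
theorem constQ_injective [Fintype G] : CategoryTheory.Injective (constQ G) := by
  constructor
  intro X Y g f hf
  have hinj : Function.Injective (f.app (Opposite.op (pt G))) :=
    (ModuleCat.mono_iff_injective _).mp inferInstance
  obtain ⟨r, hr⟩ :=
    ((f.app (Opposite.op (pt G))).hom : X.obj (Opposite.op (pt G)) →ₗ[ℚ]
        Y.obj (Opposite.op (pt G))).exists_leftInverse_of_injective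
      (LinearMap.ker_eq_bot.mpr hinj)
  have gnat : ∀ {A B : OrbitObj G} (w : A ⟶ B) (x : X.obj (Opposite.op B)),
      g.app (Opposite.op A) (X.map w.op x) = g.app (Opposite.op B) x := by
    intro A B w x
    exact ConcreteCategory.congr_hom (g.naturality w.op) x
  have fnat : ∀ {A B : OrbitObj G} (w : A ⟶ B) (x : X.obj (Opposite.op B)),
      f.app (Opposite.op A) (X.map w.op x) = Y.map w.op (f.app (Opposite.op B) x) := by
    intro A B w x
    exact ConcreteCategory.congr_hom (f.naturality w.op) x
  set φ : X.obj (Opposite.op (pt G)) →ₗ[ℚ] ℚ :=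
    ((g.app (Opposite.op (pt G))).hom : X.obj (Opposite.op (pt G)) →ₗ[ℚ] ℚ) with hφ
  set n : ℚ := (Fintype.card G : ℚ) with hn
  have hn0 : n ≠ 0 := Nat.cast_ne_zero.mpr Fintype.card_ne_zero
  -- averaged extension at the free orbit
  set ψ : Y.obj (Opposite.op (pt G)) →ₗ[ℚ] ℚ :=
    n⁻¹ • ∑ a : G, (φ.comp r).comp
      ((Y.map (rmul a).op).hom : Y.obj (Opposite.op (pt G)) →ₗ[ℚ] Y.obj (Opposite.op (pt G))) with hψ
  -- φ is invariant under rmul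
  have hφinv : ∀ (a : G) (x : X.obj (Opposite.op (pt G))),
      φ (X.map (rmul a).op x) = φ x := fun a x => gnat (rmul a) x
  -- ψ extends φ
  have hext : ∀ x : X.obj (Opposite.op (pt G)), ψ (f.app (Opposite.op (pt G)) x) = φ x := by
    intro x
    rw [hψ]
    simp only [LinearMap.smul_apply, LinearMap.coe_sum, Finset.sum_apply, LinearMap.comp_apply]
    have hterm : ∀ a : G,
        φ (r (Y.map (rmul a).op (f.app (Opposite.op (pt G)) x))) = φ x := by
      intro a
      rw [← fnat (rmul a) x]
      have h2 := LinearMap.congr_fun hr (X.map (rmul a).op x)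
      simp only [LinearMap.comp_apply, LinearMap.id_apply] at h2
      rw [h2]
      exact hφinv a x
    rw [Finset.sum_congr rfl (fun a _ => hterm a)]
    simp [hn, smul_eq_mul]
  -- ψ is invariant under rmul
  have hψinv : ∀ (b : G) (y : Y.obj (Opposite.op (pt G))),
      ψ (Y.map (rmul b).op y) = ψ y := by
    intro b y
    rw [hψ]
    simp only [LinearMap.smul_apply, LinearMap.coe_sum, Finset.sum_apply, LinearMap.comp_apply]
    congr 1
    have hterm : ∀ a : G,
        Y.map (rmul a).op (Y.map (rmul b).op y) = Y.map (rmul (a * b)).op y := by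
      intro a
      have hcomp : (rmul (a*b) : pt G ⟶ pt G).op = (rmul b).op ≫ (rmul a).op := by
        rw [← op_comp, rmul_comp]
      rw [hcomp, Y.map_comp]
      rfl
    calc ∑ a : G, φ (r (Y.map (rmul a).op (Y.map (rmul b).op y)))
        = ∑ a : G, φ (r (Y.map (rmul (a * b)).op y)) :=
          Finset.sum_congr rfl (fun a _ => by rw [hterm a])
      _ = ∑ a : G, φ (r (Y.map (rmul a).op y)) :=
          Fintype.sum_equiv (Equiv.mulRight b) _ _ (fun a => rfl)
  -- the lift
  let happ : ∀ k : (OrbitObj G)ᵒᵖ, Y.obj k ⟶ (constQ G).obj k := fun k =>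
    ModuleCat.ofHom (ψ.comp (Y.map (toOrbit k.unop).op).hom : Y.obj k →ₗ[ℚ] ℚ)
  have hnat : ∀ {k k' : (OrbitObj G)ᵒᵖ} (w : k ⟶ k'),
      Y.map w ≫ happ k' = happ k ≫ (constQ G).map w := by
    intro k k' w
    obtain ⟨a, ha⟩ := factor (w.unop)
    apply ModuleCat.hom_ext
    apply LinearMap.ext
    intro y
    have key : Y.map (toOrbit k'.unop).op (Y.map w y) =
        Y.map (rmul a).op (Y.map (toOrbit k.unop).op y) := by
      have h1 : Y.map w ≫ Y.map (toOrbit k'.unop).op =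
          Y.map (toOrbit k.unop).op ≫ Y.map (rmul a).op := by
        rw [← Y.map_comp, ← Y.map_comp]
        congr 1
        rw [← Quiver.Hom.op_unop w, ← op_comp, ← op_comp, ha]
      exact ConcreteCategory.congr_hom h1 y
    show ψ (Y.map (toOrbit k'.unop).op (Y.map w y)) =
      ψ (Y.map (toOrbit k.unop).op y)
    rw [key, hψinv a]
  refine ⟨⟨happ, by intro k k' w; exact hnat w⟩, ?_⟩
  apply NatTrans.ext
  funext k
  apply ModuleCat.hom_ext
  apply LinearMap.ext
  intro x
  show ψ (Y.map (toOrbit k.unop).op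
      (f.app (Opposite.op (Opposite.unop k)) x)) = g.app (Opposite.op (Opposite.unop k)) x
  rw [← fnat (toOrbit k.unop) x, hext, hφ]
  exact gnat (toOrbit k.unop) x
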